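/- Let (v_1,…,v_d) be a Popescu system on K with M = {v_k, v_k* : 1 ≤ k ≤ d}'' satisfying M' = {x ∈ B(K) : Σ_{k=1}^d v_k x v_k* = x}, and let (H, P, (S_1,…,S_d)) be a minimal Popescu dilation of (v_1,…,v_d). If Ω ∈ K is a unit vector cyclic for M in K (i.e. the closure of MΩ equals K), then Ω is cyclic for the Cuntz family in H: the linear span of {S_I S_J* Ω : I, J finite multi-indices} is dense in H. -/

import Mathlib

open ContinuousLinearMap Filter
open scoped ComplexInnerProductSpace ComplexOrder

noncomputable section

/-- The operator `S_I = S_{i₁} ⋯ S_{i_m}` associated to a finite multi-index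
(the empty multi-index gives the identity). -/
def cword {d : ℕ} {H : Type*} [NormedAddCommGroup H] [InnerProductSpace ℂ H]
    (S : Fin d → H →L[ℂ] H) (I : List (Fin d)) : H →L[ℂ] H :=
  (I.map S).prod

/-- A Cuntz family: `Sᵢ* Sⱼ = δᵢⱼ 1` and `∑ₖ Sₖ Sₖ* = 1`. -/
def IsCuntzFamily {d : ℕ} {H : Type*} [NormedAddCommGroup H] [InnerProductSpace ℂ H]
    [CompleteSpace H] (S : Fin d → H →L[ℂ] H) : Prop :=
  (∀ i j : Fin d, adjoint (S i) ∘L S j = if i = j then 1 else 0) ∧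
    ∑ k : Fin d, S k ∘L adjoint (S k) = 1

/-- A Popescu system: `∑ₖ vₖ vₖ* = 1`. -/
def IsPopescuSystem {d : ℕ} {K : Type*} [NormedAddCommGroup K] [InnerProductSpace ℂ K]
    [CompleteSpace K] (v : Fin d → K →L[ℂ] K) : Prop :=
  ∑ k : Fin d, v k ∘L adjoint (v k) = 1

/-- A minimal Popescu dilation of a Popescu system `v` on `K`: `H` contains `K` as a closed
subspace via the isometric embedding `ι` (so `P = ι ∘ ι*` is the orthogonal projection of `H`
onto the copy of `K`), `S` is a Cuntz family leaving the copy of `K` invariant under every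
`Sₖ*` (`P Sₖ* P = Sₖ* P`), the compression of `Sₖ` to `K` is `vₖ`, and the vectors
`S_I ξ`, `ξ ∈ K`, are total in `H`. -/
def IsMinimalDilation {d : ℕ} {K H : Type*}
    [NormedAddCommGroup K] [InnerProductSpace ℂ K] [CompleteSpace K]
    [NormedAddCommGroup H] [InnerProductSpace ℂ H] [CompleteSpace H]
    (v : Fin d → K →L[ℂ] K) (ι : K →L[ℂ] H) (S : Fin d → H →L[ℂ] H) : Prop :=
  IsCuntzFamily S ∧
  adjoint ι ∘L ι = 1 ∧
  (∀ k, (ι ∘L adjoint ι) ∘L adjoint (S k) ∘L (ι ∘L adjoint ι) = adjoint (S k) ∘L (ι ∘L adjoint ι)) ∧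
  (∀ k, adjoint ι ∘L S k ∘L ι = v k) ∧
  Dense ((Submodule.span ℂ {x : H | ∃ (I : List (Fin d)) (ξ : K), x = cword S I (ι ξ)} :
    Submodule ℂ H) : Set H)


section Aux

variable {d : ℕ} {E : Type*} [NormedAddCommGroup E] [InnerProductSpace ℂ E]

lemma cword_nil' (S : Fin d → E →L[ℂ] E) : cword S [] = 1 := rfl

lemma cword_cons' (S : Fin d → E →L[ℂ] E) (i : Fin d) (I : List (Fin d)) :
    cword S (i :: I) = S i ∘L cword S I := by
  simp [cword, List.prod_cons, mul_def]

lemma cword_append' (S : Fin d → E →L[ℂ] E) (I J : List (Fin d)) :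
    cword S (I ++ J) = cword S I ∘L cword S J := by
  simp [cword, List.prod_append, mul_def]

lemma cword_singleton' (S : Fin d → E →L[ℂ] E) (k : Fin d) : cword S [k] = S k := by
  simp [cword]

/-- If a closed subspace is invariant under `A` and `A*`, the orthogonal projection onto it
commutes with `A`. -/
lemma proj_comm [CompleteSpace E] (N : Submodule ℂ E) [N.HasOrthogonalProjection]
    (A : E →L[ℂ] E) (h1 : ∀ x ∈ N, A x ∈ N) (h2 : ∀ x ∈ N, adjoint A x ∈ N) (y : E) :
    (N.subtypeL ∘L N.orthogonalProjectionOnto) (A y) = A ((N.subtypeL ∘L N.orthogonalProjectionOnto) y) := by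
  set q : E := ↑(N.orthogonalProjectionOnto y) with hqdef
  have hq : q ∈ N := (N.orthogonalProjectionOnto y).2
  have hyq : y - q ∈ Nᗮ := Submodule.sub_starProjection_mem_orthogonal y
  have hperp : A (y - q) ∈ Nᗮ := by
    rw [Submodule.mem_orthogonal]
    intro u hu
    rw [← ContinuousLinearMap.adjoint_inner_left A (y - q) u]
    exact (Submodule.mem_orthogonal _ _).1 hyq _ (h2 u hu)
  have hAy : A y = A q + A (y - q) := by rw [← map_add, add_sub_cancel]
  have e2 : N.orthogonalProjectionOnto (A (y - q)) = 0 :=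
    Submodule.orthogonalProjectionOnto_apply_of_mem_orthogonal hperp
  have t1 : (N.subtypeL ∘L N.orthogonalProjectionOnto) (A q) = A q := by
    rw [ContinuousLinearMap.comp_apply, Submodule.subtypeL_apply]
    exact Submodule.starProjection_eq_self_iff.2 (h1 q hq)
  have t2 : (N.subtypeL ∘L N.orthogonalProjectionOnto) (A (y - q)) = 0 := by
    rw [ContinuousLinearMap.comp_apply, e2, map_zero]
  rw [hAy, map_add, t1, t2, add_zero]
  rfl

end Aux
/-- If the Popescu system `v` on `K` satisfies
`M' = {x : ∑ₖ vₖ x vₖ* = x}` for `M = {vₖ, vₖ*}''`, and `Ω ∈ K` is a unit vector cyclic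
for `M` in `K`, then in any minimal Popescu dilation `(H, ι, S)` the vector `ι Ω` is cyclic
for the Cuntz family: the span of `{S_I S_J* (ι Ω)}` is dense in `H`. -/
theorem cyclic_for_cuntz_of_cyclic_for_M {d : ℕ} (hd : 2 ≤ d)
    {K H : Type*} [NormedAddCommGroup K] [InnerProductSpace ℂ K] [CompleteSpace K]
    [NormedAddCommGroup H] [InnerProductSpace ℂ H] [CompleteSpace H]
    (v : Fin d → K →L[ℂ] K) (hv : IsPopescuSystem v)
    (M : Set (K →L[ℂ] K))
    (hM : M = Set.centralizer (Set.centralizer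
        (Set.range v ∪ Set.range (fun k => adjoint (v k)))))
    (hMcomm : Set.centralizer M
        = {x : K →L[ℂ] K | (∑ k : Fin d, v k ∘L x ∘L adjoint (v k)) = x})
    (ι : K →L[ℂ] H) (S : Fin d → H →L[ℂ] H) (hdil : IsMinimalDilation v ι S)
    (Ω : K) (hΩ : ‖Ω‖ = 1)
    (hcycM : Dense {ξ : K | ∃ m ∈ M, ξ = m Ω}) :
    Dense ((Submodule.span ℂ
        {x : H | ∃ I J : List (Fin d), x = cword S I (adjoint (cword S J) (ι Ω))} :
        Submodule ℂ H) : Set H) := by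
  obtain ⟨hC, hι, hPk, hvk, hdense⟩ := hdil
  -- pointwise form of ι* ι = 1
  have hι' : ∀ ξ : K, adjoint ι (ι ξ) = ξ := by
    intro ξ
    have := ContinuousLinearMap.ext_iff.1 hι ξ
    simpa using this
  -- adjoint of v k as a compression
  have hvadj : ∀ k, adjoint (v k) = adjoint ι ∘L adjoint (S k) ∘L ι := by
    intro k
    rw [← hvk k]
    simp only [adjoint_comp, adjoint_adjoint, comp_assoc]
  -- key identity (A):  S k* ι = ι (v k)*
  have hA : ∀ k, adjoint (S k) ∘L ι = ι ∘L adjoint (v k) := by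
    intro k
    have h := congrArg (fun T : H →L[ℂ] H => T ∘L ι) (hPk k)
    simp only [comp_assoc, hι, ContinuousLinearMap.one_def, ContinuousLinearMap.comp_id] at h
    rw [hvadj k]
    exact h.symm
  have hA' : ∀ k (ξ : K), adjoint (S k) (ι ξ) = ι (adjoint (v k) ξ) := by
    intro k ξ
    have := ContinuousLinearMap.ext_iff.1 (hA k) ξ
    simpa using this
  -- key identity (B):  ι* (S k) = v k ι*
  have hB' : ∀ k (y : H), adjoint ι (S k y) = v k (adjoint ι y) := by
    intro k y
    have h := congrArg adjoint (hA k)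
    simp only [adjoint_comp, adjoint_adjoint] at h
    have := ContinuousLinearMap.ext_iff.1 h y
    simpa using this
  -- the generated subspaces
  set gen : Set H :=
    {x : H | ∃ I J : List (Fin d), x = cword S I (adjoint (cword S J) (ι Ω))} with hgen
  set sp : Submodule ℂ H := Submodule.span ℂ gen with hsp
  set N : Submodule ℂ H := sp.topologicalClosure with hN
  haveI : CompleteSpace ↥N := (sp.isClosed_topologicalClosure).completeSpace_coe
  -- a continuous operator mapping gen into sp maps N into N
  have key : ∀ T : H →L[ℂ] H, (∀ x ∈ gen, T x ∈ sp) → ∀ y ∈ N, T y ∈ N := by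
    intro T hT y hy
    have hle : sp ≤ Submodule.comap (T : H →ₗ[ℂ] H) N := by
      rw [hsp, Submodule.span_le]
      intro x hx
      exact Submodule.mem_comap.mpr (sp.le_topologicalClosure (hT x hx))
    have hcl : IsClosed ((Submodule.comap (T : H →ₗ[ℂ] H) N : Submodule ℂ H) : Set H) := by
      have hpre : ((Submodule.comap (T : H →ₗ[ℂ] H) N : Submodule ℂ H) : Set H)
          = T ⁻¹' (N : Set H) := rfl
      rw [hpre]
      exact (sp.isClosed_topologicalClosure).preimage T.continuous
    exact Submodule.topologicalClosure_minimal sp hle hcl hy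
  -- invariance of N under S k
  have hNS : ∀ k, ∀ y ∈ N, S k y ∈ N := by
    intro k
    refine key (S k) ?_
    rintro x ⟨I, J, rfl⟩
    refine Submodule.subset_span ⟨k :: I, J, ?_⟩
    rw [cword_cons']
    rfl
  -- invariance of N under (S k)*
  have hNSadj : ∀ k, ∀ y ∈ N, adjoint (S k) y ∈ N := by
    intro k
    refine key (adjoint (S k)) ?_
    rintro x ⟨I, J, rfl⟩
    cases I with
    | nil =>
        refine Submodule.subset_span ⟨[], J ++ [k], ?_⟩
        simp only [cword_nil', ContinuousLinearMap.one_apply]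
        rw [cword_append', cword_singleton', adjoint_comp, ContinuousLinearMap.comp_apply]
    | cons i I' =>
        have hz : adjoint (S k) (cword S (i :: I') (adjoint (cword S J) (ι Ω)))
            = (if k = i then (1 : H →L[ℂ] H) else 0) (cword S I' (adjoint (cword S J) (ι Ω))) := by
          have h0 : cword S (i :: I') (adjoint (cword S J) (ι Ω))
              = (S i) (cword S I' (adjoint (cword S J) (ι Ω))) := by
            rw [cword_cons']; rfl
          rw [h0, ← ContinuousLinearMap.comp_apply (adjoint (S k)) (S i), hC.1 k i]
        rw [hz]
        by_cases hki : k = i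
        · simp only [hki, if_pos rfl, ContinuousLinearMap.one_apply]
          exact Submodule.subset_span ⟨I', J, rfl⟩
        · simp only [if_neg hki, ContinuousLinearMap.zero_apply]
          exact sp.zero_mem
  -- the projection onto N
  set Q : H →L[ℂ] H := N.subtypeL ∘L N.orthogonalProjectionOnto with hQ
  have hQmem : ∀ y : H, Q y ∈ N := fun y => (N.orthogonalProjectionOnto y).2
  have hQid : ∀ y ∈ N, Q y = y := by
    intro y hy
    rw [hQ]
    exact Submodule.starProjection_eq_self_iff.2 hy
  have hQcomm : ∀ k (y : H), Q (adjoint (S k) y) = adjoint (S k) (Q y) := by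
    intro k y
    refine proj_comm N (adjoint (S k)) (hNSadj k) ?_ y
    intro x hx
    rw [adjoint_adjoint]
    exact hNS k x hx
  -- the operator x = ι* Q ι
  set x : K →L[ℂ] K := adjoint ι ∘L (Q ∘L ι) with hx
  have hxfix : (∑ k : Fin d, v k ∘L x ∘L adjoint (v k)) = x := by
    ext ξ
    have hterm : ∀ k : Fin d, (v k ∘L x ∘L adjoint (v k)) ξ
        = adjoint ι ((S k ∘L adjoint (S k)) (Q (ι ξ))) := by
      intro k
      simp only [comp_apply, hx]
      rw [← hA' k ξ, hQcomm k (ι ξ), ← hB' k]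
    rw [ContinuousLinearMap.sum_apply]
    simp only [hterm]
    rw [← map_sum]
    have : (∑ k : Fin d, (S k ∘L adjoint (S k)) (Q (ι ξ)))
        = (∑ k : Fin d, S k ∘L adjoint (S k)) (Q (ι ξ)) := by
      rw [ContinuousLinearMap.sum_apply]
    rw [this, hC.2]
    simp [hx]
  have hxcent : x ∈ Set.centralizer M := by
    rw [hMcomm]
    exact hxfix
  have hΩN : ι Ω ∈ N := by
    refine sp.le_topologicalClosure (Submodule.subset_span ?_)
    refine ⟨[], [], ?_⟩
    simp only [cword_nil', ContinuousLinearMap.one_apply, ← star_eq_adjoint, star_one]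
  have hxΩ : x Ω = Ω := by
    simp only [hx, comp_apply]
    rw [hQid (ι Ω) hΩN, hι']
  -- x is the identity, by cyclicity of Ω for M
  have hx1 : ∀ ξ : K, x ξ = ξ := by
    have heq : Set.EqOn (⇑x) id {ξ : K | ∃ m ∈ M, ξ = m Ω} := by
      rintro ξ ⟨m, hm, rfl⟩
      have hcomm := (Set.mem_centralizer_iff.1 hxcent) m hm
      have := ContinuousLinearMap.ext_iff.1 hcomm Ω
      simp only [ContinuousLinearMap.mul_apply] at this
      show x (m Ω) = m Ω
      rw [← this, hxΩ]
    have := Continuous.ext_on hcycM x.continuous continuous_id heq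
    intro ξ
    exact congrFun this ξ
  -- hence ι ξ ∈ N for every ξ
  have hιN : ∀ ξ : K, ι ξ ∈ N := by
    intro ξ
    set y : H := ι ξ with hy
    have hadj : adjoint ι (Q y) = ξ := hx1 ξ
    have hyy : (inner ℂ y y : ℂ) = inner ℂ ξ ξ := by
      rw [← ContinuousLinearMap.adjoint_inner_left ι ξ y, hy, hι']
    have hqy : (inner ℂ (Q y) y : ℂ) = inner ℂ ξ ξ := by
      rw [hy, ← ContinuousLinearMap.adjoint_inner_left ι ξ (Q (ι ξ)), ← hy, hadj]
    have hsub : y - Q y ∈ Nᗮ := by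
      have : Q y = ↑(N.orthogonalProjectionOnto y) := rfl
      rw [this]
      exact Submodule.sub_starProjection_mem_orthogonal y
    have hz : (inner ℂ (y - Q y) (y - Q y) : ℂ) = 0 := by
      have h1 : (inner ℂ (y - Q y) (Q y) : ℂ) = 0 :=
        (Submodule.mem_orthogonal' N _).1 hsub _ (hQmem y)
      have h2 : (inner ℂ (y - Q y) y : ℂ) = 0 := by
        rw [inner_sub_left, hyy, hqy, sub_self]
      rw [inner_sub_right, h1, h2, sub_zero]
    have : y - Q y = 0 := inner_self_eq_zero.1 hz
    have hyQ : y = Q y := by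
      have := sub_eq_zero.1 this
      exact this
    rw [hyQ]
    exact hQmem y
  -- every S_I ι ξ lies in N
  have hword : ∀ (I : List (Fin d)) (ξ : K), cword S I (ι ξ) ∈ N := by
    intro I
    induction I with
    | nil => intro ξ; rw [cword_nil']; simpa using hιN ξ
    | cons i I' ih =>
        intro ξ
        rw [cword_cons', comp_apply]
        exact hNS i _ (ih ξ)
  -- conclude by minimality
  have hsub : (Submodule.span ℂ {x : H | ∃ (I : List (Fin d)) (ξ : K), x = cword S I (ι ξ)} :
      Submodule ℂ H) ≤ N := by
    rw [Submodule.span_le]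
    rintro z ⟨I, ξ, rfl⟩
    exact hword I ξ
  have hDN : Dense (N : Set H) := hdense.mono hsub
  have hNuniv : (N : Set H) = Set.univ :=
    (sp.isClosed_topologicalClosure).closure_eq ▸ hDN.closure_eq
  rw [dense_iff_closure_eq]
  have : closure (sp : Set H) = (N : Set H) := (sp.topologicalClosure_coe).symm
  rw [hsp] at this ⊢
  rw [this, hNuniv]
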